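/- There exists a universal integer N₃ such that for every symmetric log-concave function u on ℝ^n and every n ≥ N₃, ∫_{|x|>2√n} |x|³ u(x) dμ_n(x) ≤ e^{-n/2} ∫_{|x|<√n} u(x) dμ_n(x). -/

import Mathlib

open MeasureTheory Real Set ENNReal

/-- The standard Gaussian measure on ℝⁿ. -/
noncomputable def stdGaussian (n : ℕ) : Measure (EuclideanSpace ℝ (Fin n)) :=
  volume.withDensity fun x =>
    ENNReal.ofReal ((2 * π) ^ (-(n : ℝ) / 2) * Real.exp (-‖x‖ ^ 2 / 2))

/-- A symmetric (even) log-concave function on ℝⁿ. -/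
def IsSymmLogConcave (n : ℕ) (f : EuclideanSpace ℝ (Fin n) → ℝ) : Prop :=
  (∀ x, 0 ≤ f x) ∧ (∀ x, f (-x) = f x) ∧
    ∀ x y : EuclideanSpace ℝ (Fin n), ∀ l : ℝ, 0 < l → l < 1 →
      f x ^ l * f y ^ (1 - l) ≤ f (l • x + (1 - l) • y)

lemma slc_le_center {n : ℕ} {u : EuclideanSpace ℝ (Fin n) → ℝ}
    (h : IsSymmLogConcave n u) (x : EuclideanSpace ℝ (Fin n)) : u x ≤ u 0 := by
  obtain ⟨hpos, heven, hlc⟩ := h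
  rcases eq_or_lt_of_le (hpos x) with h0 | h0
  · rw [← h0]; exact hpos 0
  · have h2 := hlc x (-x) (1/2) (by norm_num) (by norm_num)
    have hx : ((1:ℝ)/2) • x + (1 - (1:ℝ)/2) • (-x) = 0 := by
      rw [smul_neg]
      rw [show (1 - (1:ℝ)/2) = 1/2 by norm_num]
      exact add_neg_cancel _
    have h2' := h2.trans_eq (congrArg u hx)
    rw [heven] at h2'
    calc u x = u x ^ ((1:ℝ)/2) * u x ^ (1 - (1:ℝ)/2) := by
          rw [← Real.rpow_add h0]; norm_num
      _ ≤ u 0 := h2'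

lemma slc_ray_mono {n : ℕ} {u : EuclideanSpace ℝ (Fin n) → ℝ}
    (h : IsSymmLogConcave n u) {c : ℝ} (hc0 : 0 < c) (hc1 : c < 1)
    (x : EuclideanSpace ℝ (Fin n)) : u x ≤ u (c • x) := by
  obtain ⟨hpos, heven, hlc⟩ := h
  rcases eq_or_lt_of_le (hpos x) with h0 | h0
  · rw [← h0]; exact hpos _
  · have h2 := hlc x 0 c hc0 hc1
    rw [smul_zero, add_zero] at h2
    have hle : u x ^ (1 - c) ≤ u 0 ^ (1 - c) :=
      Real.rpow_le_rpow (le_of_lt h0) (slc_le_center ⟨hpos, heven, hlc⟩ x) (by linarith)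
    calc u x = u x ^ (c : ℝ) * u x ^ (1 - c) := by
          rw [← Real.rpow_add h0]; norm_num
      _ ≤ u x ^ (c : ℝ) * u 0 ^ (1 - c) := by
          apply mul_le_mul_of_nonneg_left hle (Real.rpow_nonneg (le_of_lt h0) _)
      _ ≤ u (c • x) := h2


lemma slc_aemeasurable {n : ℕ} {u : EuclideanSpace ℝ (Fin n) → ℝ}
    (h : IsSymmLogConcave n u) :
    AEMeasurable u (volume : Measure (EuclideanSpace ℝ (Fin n))) := by
  obtain ⟨hpos, heven, hlc⟩ := h
  have hconv : ∀ t : ℝ, Convex ℝ {x : EuclideanSpace ℝ (Fin n) | t < u x} := by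
    intro t x hx y hy a b ha hb hab
    rcases eq_or_lt_of_le ha with ha0 | ha0
    · have hb1 : b = 1 := by linarith
      simp only [← ha0, hb1, zero_smul, one_smul, zero_add]
      exact hy
    rcases eq_or_lt_of_le hb with hb0 | hb0
    · have ha1 : a = 1 := by linarith
      simp only [← hb0, ha1, zero_smul, one_smul, add_zero]
      exact hx
    have ha1 : a < 1 := by linarith
    have hbeq : b = 1 - a := by linarith
    have key := hlc x y a ha0 ha1
    rw [← hbeq] at key
    rcases lt_or_ge t 0 with ht | ht
    · exact lt_of_lt_of_le ht (hpos _)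
    · have hux : 0 < u x := lt_of_le_of_lt ht hx
      have huy : 0 < u y := lt_of_le_of_lt ht hy
      refine lt_of_lt_of_le ?_ key
      rcases eq_or_lt_of_le ht with ht0 | ht0
      · rw [← ht0]
        exact mul_pos (Real.rpow_pos_of_pos hux a) (Real.rpow_pos_of_pos huy b)
      · calc t = t ^ (a : ℝ) * t ^ (b : ℝ) := by
              rw [← Real.rpow_add ht0, hab, Real.rpow_one]
          _ < u x ^ (a : ℝ) * u y ^ (b : ℝ) := by
              apply mul_lt_mul' (le_of_lt ?_) ?_ (Real.rpow_nonneg (le_of_lt ht0) _)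
                (Real.rpow_pos_of_pos hux a)
              · exact Real.rpow_lt_rpow (le_of_lt ht0) hx ha0
              · exact Real.rpow_lt_rpow (le_of_lt ht0) hy hb0
  have hnm : NullMeasurable u (volume : Measure (EuclideanSpace ℝ (Fin n))) := by
    have : @Measurable (NullMeasurableSpace (EuclideanSpace ℝ (Fin n)) volume) ℝ _ _ u :=
      measurable_of_Ioi fun t => ((hconv t).nullMeasurableSet _ : NullMeasurableSet _ _)
    exact this
  exact hnm.aemeasurable


-- step 1: 81/56 ≤ e^(3/8)
lemma aux_exp38 : (81/56 : ℝ) ≤ Real.exp (3/8) := by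
  have h8 : ((81:ℝ)/56) ^ (8:ℕ) ≤ Real.exp (3/8) ^ (8:ℕ) := by
    rw [← Real.exp_nat_mul]
    rw [show ((8:ℕ):ℝ) * (3/8) = 3 by norm_num]
    calc ((81:ℝ)/56)^(8:ℕ) ≤ 2.7182818283 ^ (3:ℕ) := by norm_num
      _ ≤ Real.exp 1 ^ (3:ℕ) := by
          apply pow_le_pow_left₀ (by norm_num) (le_of_lt Real.exp_one_gt_d9)
      _ = Real.exp 3 := by rw [← Real.exp_nat_mul]; norm_num
  exact le_of_pow_le_pow_left₀ (by norm_num) (le_of_lt (Real.exp_pos _)) h8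

-- step 2: 24 n² ≤ (1359/1250)^n  for n ≥ 100000
lemma aux_poly (n : ℕ) (hn : 100000 ≤ n) : (24 : ℝ) * n ^ 2 ≤ (1359/1250 : ℝ) ^ n := by
  set m := n / 4 with hm
  have hm25 : 25000 ≤ m := by
    rw [hm]; omega
  have h4m : 4 * m ≤ n := Nat.mul_div_le n 4 |>.trans_eq (by ring) |>.trans_eq rfl
  have hn4 : n ≤ 4 * m + 3 := by omega
  have hb : (1 : ℝ) + m * (109/1250) ≤ (1359/1250 : ℝ) ^ m := by
    have := one_add_mul_le_pow (a := (109/1250 : ℝ)) (by norm_num) m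
    convert this using 2 <;> first | rfl | norm_num
  have hbm : (m : ℝ) * (109/1250) ≤ (1359/1250 : ℝ) ^ m := by
    nlinarith [hb]
  have hpos : (0:ℝ) ≤ (m : ℝ) * (109/1250) := by positivity
  have h4 : ((m : ℝ) * (109/1250)) ^ (4:ℕ) ≤ ((1359/1250 : ℝ) ^ m) ^ (4:ℕ) :=
    pow_le_pow_left₀ hpos hbm 4
  have hpow : ((1359/1250 : ℝ) ^ m) ^ (4:ℕ) ≤ (1359/1250 : ℝ) ^ n := by
    rw [← pow_mul]
    apply pow_le_pow_right₀ (by norm_num)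
    omega
  refine le_trans ?_ (le_trans h4 hpow)
  have hcast : (n : ℝ) ≤ 4 * m + 3 := by exact_mod_cast hn4
  have hmr : (25000 : ℝ) ≤ m := by exact_mod_cast hm25
  nlinarith [sq_nonneg ((m:ℝ) - 25000), sq_nonneg ((m:ℝ)*(m:ℝ) - 25000*25000)]

lemma aux_coef (n : ℕ) (hn : 100000 ≤ n) (k : ℕ) :
    (2*Real.sqrt n*(9/8)^(k+1))^3 * Real.exp (-(3/8)*(2*Real.sqrt n*(9/8)^k)^2)
      * ((20/9)*(9/8:ℝ)^(k+1))^n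
    ≤ Real.exp (-(n:ℝ)/2) * (1/2)^(k+1) := by
  set s := Real.sqrt n with hs
  have hs0 : 0 ≤ s := Real.sqrt_nonneg _
  have hs2 : s^2 = n := Real.sq_sqrt (by positivity)
  have hsn : s ≤ n := by
    rw [hs]
    calc Real.sqrt n ≤ Real.sqrt ((n:ℝ)^2) := by
          apply Real.sqrt_le_sqrt
          have : (1:ℝ) ≤ n := by exact_mod_cast (by omega : 1 ≤ n)
          nlinarith
      _ = n := by rw [Real.sqrt_sq (by positivity)]
  have hn10 : (10:ℕ) ≤ n := by omega
  -- exponential term bound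
  have hexp : Real.exp (-(3/8)*(2*s*(9/8:ℝ)^k)^2)
      ≤ Real.exp (-(3/2)*n) * Real.exp (-(3/8)*n)^k := by
    rw [← Real.exp_nat_mul, ← Real.exp_add]
    apply Real.exp_le_exp.2
    have hsq : (2*s*(9/8:ℝ)^k)^2 = 4*(n:ℝ)*(81/64)^k := by
      rw [mul_pow, mul_pow, ← pow_mul, pow_mul']
      rw [hs2]; norm_num
    rw [hsq]
    have hber : 1 + (k:ℝ)*(17/64) ≤ (81/64:ℝ)^k := by
      have := one_add_mul_le_pow (a := (17/64 : ℝ)) (by norm_num) k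
      convert this using 2 <;> first | rfl | norm_num
    have hnn : (0:ℝ) ≤ n := by positivity
    have hkk : (0:ℝ) ≤ k := by positivity
    nlinarith [mul_le_mul_of_nonneg_left hber hnn]
  -- T2 : geometric factor bound
  have hT2 : (9/8:ℝ)^3 * ((9/8:ℝ)^n * Real.exp (-(3/8)*n)) ≤ 1/2 := by
    have h1 : (9/8:ℝ)^n * Real.exp (-(3/8)*n) = ((9/8)*Real.exp (-3/8))^n := by
      rw [mul_pow, ← Real.exp_nat_mul]
      ring_nf
    have h2 : (9/8:ℝ)*Real.exp (-3/8) ≤ 7/9 := by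
      have : Real.exp (-3/8) ≤ 56/81 := by
        rw [show (-3/8 : ℝ) = -(3/8) by norm_num, Real.exp_neg]
        calc (Real.exp (3/8))⁻¹ ≤ ((81:ℝ)/56)⁻¹ :=
              inv_anti₀ (by norm_num) aux_exp38
          _ = 56/81 := by norm_num
      nlinarith [this]
    have h3 : ((9/8:ℝ)*Real.exp (-3/8))^n ≤ (7/9:ℝ)^n :=
      pow_le_pow_left₀ (by positivity) h2 n
    have h4 : (7/9:ℝ)^n ≤ (7/9:ℝ)^10 :=
      pow_le_pow_of_le_one (by norm_num) (by norm_num) hn10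
    calc (9/8:ℝ)^3 * ((9/8:ℝ)^n * Real.exp (-(3/8)*n)) ≤ (9/8:ℝ)^3 * (7/9:ℝ)^10 := by
          rw [h1]
          apply mul_le_mul_of_nonneg_left (h3.trans h4) (by positivity)
      _ ≤ 1/2 := by norm_num
  -- T1 : main factor bound
  have hT1 : 8*s^3*(9/8:ℝ)^3*((20/9:ℝ)^n*(9/8:ℝ)^n)*Real.exp (-(3/2)*n)
      ≤ Real.exp (-(n:ℝ)/2) * (1/2) := by
    have hcomb : (20/9:ℝ)^n*(9/8:ℝ)^n = (5/2:ℝ)^n := by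
      rw [← mul_pow]; norm_num
    have hsplit : Real.exp (-(3/2)*(n:ℝ)) = Real.exp (-(n:ℝ)/2) * Real.exp (-(n:ℝ)) := by
      rw [← Real.exp_add]; ring_nf
    rw [hcomb, hsplit]
    have hmain : 8*s^3*(9/8:ℝ)^3*(5/2:ℝ)^n * Real.exp (-(n:ℝ)) ≤ 1/2 := by
      rw [Real.exp_neg]
      rw [mul_inv_le_iff₀ (Real.exp_pos _)]
      have hs3 : s^3 ≤ (n:ℝ)^2 := by
        calc s^3 = s^2 * s := by ring
          _ = (n:ℝ) * s := by rw [hs2]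
          _ ≤ (n:ℝ) * n := by
              apply mul_le_mul_of_nonneg_left hsn (by positivity)
          _ = (n:ℝ)^2 := by ring
      have hpoly := aux_poly n hn
      have hexpn : ((1359:ℝ)/500)^n ≤ Real.exp (n:ℝ) := by
        calc ((1359:ℝ)/500)^n ≤ Real.exp 1 ^ n := by
              apply pow_le_pow_left₀ (by norm_num)
              calc (1359:ℝ)/500 ≤ 2.7182818283 := by norm_num
                _ ≤ Real.exp 1 := le_of_lt Real.exp_one_gt_d9
          _ = Real.exp (n:ℝ) := by rw [← Real.exp_nat_mul]; ring_nf
      calc 8*s^3*(9/8:ℝ)^3*(5/2:ℝ)^n ≤ 8*(n:ℝ)^2*(9/8:ℝ)^3*(5/2:ℝ)^n := by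
            have : (0:ℝ) ≤ (5/2:ℝ)^n := by positivity
            nlinarith [hs3, this]
        _ ≤ (1/2) * (24*(n:ℝ)^2 * (5/2:ℝ)^n) := by
            have : (0:ℝ) ≤ (n:ℝ)^2 * (5/2:ℝ)^n := by positivity
            nlinarith [this]
        _ ≤ (1/2) * ((1359/1250:ℝ)^n * (5/2:ℝ)^n) := by
            have h52 : (0:ℝ) ≤ (5/2:ℝ)^n := by positivity
            have := mul_le_mul_of_nonneg_right hpoly h52
            nlinarith [this]
        _ = (1/2) * ((1359/500:ℝ)^n) := by rw [← mul_pow]; norm_num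
        _ ≤ (1/2) * Real.exp (n:ℝ) := by
            apply mul_le_mul_of_nonneg_left hexpn (by norm_num)
    calc 8*s^3*(9/8:ℝ)^3*(5/2:ℝ)^n*(Real.exp (-(n:ℝ)/2) * Real.exp (-(n:ℝ)))
        = Real.exp (-(n:ℝ)/2) * (8*s^3*(9/8:ℝ)^3*(5/2:ℝ)^n * Real.exp (-(n:ℝ))) := by ring
      _ ≤ Real.exp (-(n:ℝ)/2) * (1/2) := by
          apply mul_le_mul_of_nonneg_left hmain (le_of_lt (Real.exp_pos _))
  -- combine
  have key1 : (2*s*(9/8:ℝ)^(k+1))^3 * ((20/9)*(9/8:ℝ)^(k+1))^n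
      = (8*s^3*(9/8:ℝ)^3*((20/9:ℝ)^n*(9/8:ℝ)^n)) * (((9/8:ℝ)^3*(9/8:ℝ)^n)^k) := by
    have e1 : ∀ (a:ℝ) (m:ℕ), (a^(k+1))^m = a^m * (a^m)^k := by
      intro a m
      rw [← pow_mul, ← pow_mul, ← pow_add]
      congr 1
      ring
    rw [mul_pow, mul_pow, mul_pow, e1, e1, mul_pow]
    ring
  calc (2*s*(9/8:ℝ)^(k+1))^3 * Real.exp (-(3/8)*(2*s*(9/8:ℝ)^k)^2) * ((20/9)*(9/8:ℝ)^(k+1))^n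
      = ((2*s*(9/8:ℝ)^(k+1))^3 * ((20/9)*(9/8:ℝ)^(k+1))^n) * Real.exp (-(3/8)*(2*s*(9/8:ℝ)^k)^2) := by
        ring
    _ ≤ ((2*s*(9/8:ℝ)^(k+1))^3 * ((20/9)*(9/8:ℝ)^(k+1))^n) *
        (Real.exp (-(3/2)*n) * Real.exp (-(3/8)*n)^k) := by
        apply mul_le_mul_of_nonneg_left hexp (by positivity)
    _ = (8*s^3*(9/8:ℝ)^3*((20/9:ℝ)^n*(9/8:ℝ)^n)*Real.exp (-(3/2)*n)) *
        (((9/8:ℝ)^3*((9/8:ℝ)^n*Real.exp (-(3/8)*n)))^k) := by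
        rw [key1, mul_pow, mul_pow]
        ring
    _ ≤ (Real.exp (-(n:ℝ)/2) * (1/2)) * ((1/2:ℝ)^k) := by
        apply mul_le_mul hT1 (pow_le_pow_left₀ (by positivity) hT2 k) (by positivity)
        positivity
    _ = Real.exp (-(n:ℝ)/2) * (1/2)^(k+1) := by ring


set_option maxHeartbeats 2000000 in
/-- There is a universal integer `N₃` such that for every symmetric log-concave `u` on ℝⁿ
with `n ≥ N₃`,
`∫_{|x| > 2√n} |x|³ u(x) dμₙ ≤ e^{−n/2} ∫_{|x| < √n} u(x) dμₙ`. -/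
theorem tail_moment_bound :
    ∃ N₃ : ℕ, ∀ n : ℕ, N₃ ≤ n → ∀ u : EuclideanSpace ℝ (Fin n) → ℝ,
      IsSymmLogConcave n u →
      ∫ x in {x : EuclideanSpace ℝ (Fin n) | 2 * Real.sqrt n < ‖x‖},
          ‖x‖ ^ 3 * u x ∂(stdGaussian n)
        ≤ Real.exp (-(n : ℝ) / 2) *
          ∫ x in {x : EuclideanSpace ℝ (Fin n) | ‖x‖ < Real.sqrt n}, u x ∂(stdGaussian n) := by
  use 100000
  intro n hn u hu
  obtain ⟨hpos, heven, hlc⟩ := id hu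
  have hn1 : (1:ℝ) ≤ (n:ℝ) := by exact_mod_cast (by omega : 1 ≤ n)
  set s : ℝ := Real.sqrt n with hsdef
  have hs0 : 0 < s := Real.sqrt_pos.2 (by linarith)
  set Z : ℝ := (2 * π) ^ (-(n : ℝ) / 2) with hZdef
  have hZ0 : 0 < Z := Real.rpow_pos_of_pos (by positivity) _
  set w : EuclideanSpace ℝ (Fin n) → ℝ := fun x => Z * Real.exp (-‖x‖^2/2) with hwdef
  have hw0 : ∀ x, 0 < w x := fun x => mul_pos hZ0 (Real.exp_pos _)
  have hwZ : ∀ x, w x ≤ Z := by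
    intro x
    have h1 : Real.exp (-‖x‖^2/2) ≤ 1 := Real.exp_le_one_iff.2 (by nlinarith [sq_nonneg ‖x‖])
    show Z * Real.exp (-‖x‖^2/2) ≤ Z
    nlinarith [h1, hZ0]
  have hwc : Continuous w := by fun_prop
  have hμ : stdGaussian n = volume.withDensity (fun x => ENNReal.ofReal (w x)) := rfl
  have huae : AEMeasurable u (volume : Measure (EuclideanSpace ℝ (Fin n))) :=
    slc_aemeasurable hu
  have huaμ : AEMeasurable u (stdGaussian n) := by
    rw [hμ]; exact huae.mono_ac (withDensity_absolutelyContinuous _ _)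
  set Ball : Set (EuclideanSpace ℝ (Fin n)) := {x | ‖x‖ < s} with hBalldef
  have hBall : MeasurableSet Ball := measurableSet_lt measurable_norm measurable_const
  set Tail : Set (EuclideanSpace ℝ (Fin n)) := {x | 2*s < ‖x‖} with hTaildef
  have hTail : MeasurableSet Tail := measurableSet_lt measurable_const measurable_norm
  set G : EuclideanSpace ℝ (Fin n) → ℝ≥0∞ := fun y => ENNReal.ofReal (u y * w y) with hGdef
  have hG : AEMeasurable G volume := (huae.mul hwc.measurable.aemeasurable).ennreal_ofReal
  set IR : ℝ≥0∞ := ∫⁻ y in Ball, G y ∂volume with hIRdef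
  set F : EuclideanSpace ℝ (Fin n) → ℝ≥0∞ :=
    fun x => ENNReal.ofReal (‖x‖^3 * (u x * w x)) with hFdef
  have hIRfin : IR ≠ ⊤ := by
    have hb : Ball = Metric.ball (0 : EuclideanSpace ℝ (Fin n)) s := by
      ext y; simp [hBalldef, mem_ball_zero_iff]
    have h1 : IR ≤ ENNReal.ofReal (u 0 * Z) * volume Ball := by
      rw [hIRdef, ← setLIntegral_const]
      refine setLIntegral_mono' hBall fun y _ => ENNReal.ofReal_le_ofReal ?_
      exact mul_le_mul (slc_le_center hu y) (hwZ y) (le_of_lt (hw0 y)) (hpos 0)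
    refine (lt_of_le_of_lt h1 ?_).ne
    rw [hb]
    exact ENNReal.mul_lt_top ENNReal.ofReal_lt_top measure_ball_lt_top
  have hRrep : ∫ x in Ball, u x ∂(stdGaussian n) = IR.toReal := by
    rw [integral_eq_lintegral_of_nonneg_ae (ae_of_all _ fun x => hpos x)
      huaμ.restrict.aestronglyMeasurable]
    congr 1
    rw [hμ, setLIntegral_withDensity_eq_lintegral_mul₀
      (hwc.measurable.ennreal_ofReal).aemeasurable huae.ennreal_ofReal hBall]
    refine setLIntegral_congr_fun hBall (fun y _ => ?_)
    show ENNReal.ofReal (w y) * ENNReal.ofReal (u y) = ENNReal.ofReal (u y * w y)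
    rw [← ENNReal.ofReal_mul (le_of_lt (hw0 y)), mul_comm]
  have hLrep : ∫ x in Tail, ‖x‖^3 * u x ∂(stdGaussian n)
      = (∫⁻ x in Tail, F x ∂volume).toReal := by
    have hfm : AEMeasurable (fun x => ‖x‖^3 * u x) (stdGaussian n) :=
      ((measurable_norm.pow_const 3).aemeasurable).mul huaμ
    rw [integral_eq_lintegral_of_nonneg_ae
      (ae_of_all _ fun x => mul_nonneg (by positivity) (hpos x))
      hfm.restrict.aestronglyMeasurable]
    congr 1
    rw [hμ, setLIntegral_withDensity_eq_lintegral_mul₀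
      (hwc.measurable.ennreal_ofReal).aemeasurable
      (show AEMeasurable (fun x => ‖x‖^3 * u x) volume from
        ((measurable_norm.pow_const 3).aemeasurable).mul huae).ennreal_ofReal hTail]
    refine setLIntegral_congr_fun hTail (fun y _ => ?_)
    show ENNReal.ofReal (w y) * ENNReal.ofReal (‖y‖^3 * u y)
        = ENNReal.ofReal (‖y‖^3 * (u y * w y))
    rw [← ENNReal.ofReal_mul (le_of_lt (hw0 y))]
    ring_nf
  have hmain : ∫⁻ x in Tail, F x ∂volume
      ≤ ENNReal.ofReal (Real.exp (-(n:ℝ)/2)) * IR := by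
    classical
    set r : ℕ → ℝ := fun k => 2*s*(9/8)^k with hrdef
    set c : ℕ → ℝ := fun k => (9/20)*(8/9)^(k+1) with hcdef
    have hr0 : ∀ k, 0 < r k := fun k => by
      show (0:ℝ) < 2*s*(9/8)^k
      positivity
    have hrmono : ∀ {i j : ℕ}, i ≤ j → r i ≤ r j := by
      intro i j hij
      show 2*s*(9/8:ℝ)^i ≤ 2*s*(9/8:ℝ)^j
      have h2s : (0:ℝ) ≤ 2*s := by linarith
      exact mul_le_mul_of_nonneg_left (pow_le_pow_right₀ (by norm_num) hij) h2s
    have hc0 : ∀ k, 0 < c k := fun k => by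
      show (0:ℝ) < (9/20)*(8/9)^(k+1)
      positivity
    have hc25 : ∀ k, c k ≤ 2/5 := by
      intro k
      show (9/20:ℝ)*(8/9)^(k+1) ≤ 2/5
      have h89 : (8/9:ℝ)^(k+1) ≤ (8/9:ℝ)^1 :=
        pow_le_pow_of_le_one (by norm_num) (by norm_num) (by omega)
      rw [pow_one] at h89
      nlinarith
    have hcr : ∀ k, c k * r (k+1) = (9/10)*s := by
      intro k
      show (9/20:ℝ)*(8/9)^(k+1) * (2*s*(9/8)^(k+1)) = (9/10)*s
      have h89 : (8/9:ℝ)^(k+1)*(9/8)^(k+1) = 1 := by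
        rw [← mul_pow]
        norm_num
      linear_combination ((9:ℝ)/10)*s*h89
    set A : ℕ → Set (EuclideanSpace ℝ (Fin n)) :=
      fun k => {x | r k < ‖x‖ ∧ ‖x‖ ≤ r (k+1)} with hAdef
    have hAmeas : ∀ k, MeasurableSet (A k) := fun k =>
      (measurableSet_lt measurable_const measurable_norm).inter
        (measurableSet_le measurable_norm measurable_const)
    have hAdisj : Pairwise (Function.onFun Disjoint A) := by
      have key : ∀ i j, i < j → Disjoint (A i) (A j) := by
        intro i j hij
        rw [Set.disjoint_left]
        rintro x ⟨-, hx2⟩ ⟨hx3, -⟩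
        have : r (i+1) ≤ r j := hrmono hij
        linarith
      intro i j hij
      rcases lt_or_gt_of_ne hij with h | h
      · exact key i j h
      · exact (key j i h).symm
    have hAcover : Tail = ⋃ k, A k := by
      ext x
      simp only [hTaildef, hAdef, mem_setOf_eq, mem_iUnion]
      constructor
      · intro hx
        have h2s : (0:ℝ) < 2*s := by linarith
        obtain ⟨m, hm⟩ := pow_unbounded_of_one_lt (‖x‖/(2*s)) (by norm_num : (1:ℝ) < 9/8)
        have hman : ‖x‖ ≤ r (m+1) := by
          have hdiv := (div_lt_iff₀ h2s).1 hm
          show ‖x‖ ≤ 2*s*(9/8)^(m+1)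
          have hmm : (9/8:ℝ)^m ≤ (9/8)^(m+1) := pow_le_pow_right₀ (by norm_num) (by omega)
          nlinarith [hdiv, hmm, h2s]
        have hPex : ∃ j, ‖x‖ ≤ r (j+1) := ⟨m, hman⟩
        refine ⟨Nat.find hPex, ?_, Nat.find_spec hPex⟩
        rcases Nat.eq_zero_or_pos (Nat.find hPex) with h0 | hposk
        · rw [h0]
          show 2*s*(9/8:ℝ)^0 < ‖x‖
          simpa using hx
        · obtain ⟨j, hj⟩ := Nat.exists_eq_succ_of_ne_zero (Nat.pos_iff_ne_zero.1 hposk)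
          rw [hj]
          have hmin := Nat.find_min hPex (show j < Nat.find hPex by omega)
          push_neg at hmin
          exact hmin
      · rintro ⟨k, hk1, -⟩
        have hrk : r 0 ≤ r k := hrmono (Nat.zero_le k)
        have hr00 : r 0 = 2*s := by
          show 2*s*(9/8:ℝ)^0 = 2*s
          simp
        show 2*s < ‖x‖
        linarith
    rw [hAcover, lintegral_iUnion hAmeas hAdisj]
    have hshell : ∀ k, ∫⁻ x in A k, F x ∂volume
        ≤ ENNReal.ofReal (Real.exp (-(n:ℝ)/2) * (1/2)^(k+1)) * IR := by
      intro k
      have hck0 : 0 < c k := hc0 k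
      have hck1 : c k < 1 := lt_of_le_of_lt (hc25 k) (by norm_num)
      have hckne : c k ≠ 0 := ne_of_gt hck0
      set Kk : ℝ := (r (k+1))^3 * Real.exp (-(3/8)*(r k)^2) with hKkdef
      have hKk0 : 0 ≤ Kk :=
        mul_nonneg (pow_nonneg (le_of_lt (hr0 _)) 3) (Real.exp_nonneg _)
      have hpt : ∀ x ∈ A k, F x ≤ ENNReal.ofReal Kk * G (c k • x) := by
        intro x hx
        obtain ⟨hxa, hxb⟩ := hx
        have hnrm : ‖c k • x‖ = c k * ‖x‖ := by
          rw [norm_smul, Real.norm_eq_abs, abs_of_pos hck0]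
        have hum : u x ≤ u (c k • x) := slc_ray_mono hu hck0 hck1 x
        have hck2 : (c k)^2 ≤ 1/4 := by nlinarith [hc25 k, hc0 k]
        have hx2sq : (r k)^2 ≤ ‖x‖^2 := by nlinarith [hr0 k, hxa]
        have hee : Real.exp (-‖x‖^2/2)
            ≤ Real.exp (-(3/8)*(r k)^2) * Real.exp (-(c k * ‖x‖)^2/2) := by
          rw [← Real.exp_add]
          apply Real.exp_le_exp.2
          nlinarith [hx2sq, mul_le_mul_of_nonneg_right hck2 (sq_nonneg ‖x‖)]
        show ENNReal.ofReal (‖x‖^3 * (u x * w x))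
            ≤ ENNReal.ofReal Kk * ENNReal.ofReal (u (c k • x) * w (c k • x))
        rw [← ENNReal.ofReal_mul hKk0]
        apply ENNReal.ofReal_le_ofReal
        have hwck : w (c k • x) = Z * Real.exp (-(c k * ‖x‖)^2/2) := by
          show Z * Real.exp (-‖c k • x‖^2/2) = _
          rw [hnrm]
        show ‖x‖^3 * (u x * (Z * Real.exp (-‖x‖^2/2))) ≤ Kk * (u (c k • x) * w (c k • x))
        rw [hwck, hKkdef]
        have h3 : ‖x‖^3 ≤ (r (k+1))^3 := pow_le_pow_left₀ (norm_nonneg x) hxb 3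
        have hA0 : (0:ℝ) ≤ ‖x‖^3 * u x * Z :=
          mul_nonneg (mul_nonneg (by positivity) (hpos x)) (le_of_lt hZ0)
        calc ‖x‖^3 * (u x * (Z * Real.exp (-‖x‖^2/2)))
            = (‖x‖^3 * u x * Z) * Real.exp (-‖x‖^2/2) := by ring
          _ ≤ (‖x‖^3 * u x * Z) *
              (Real.exp (-(3/8)*(r k)^2) * Real.exp (-(c k * ‖x‖)^2/2)) :=
              mul_le_mul_of_nonneg_left hee hA0
          _ ≤ ((r (k+1))^3 * u (c k • x) * Z) *
              (Real.exp (-(3/8)*(r k)^2) * Real.exp (-(c k * ‖x‖)^2/2)) := by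
              apply mul_le_mul_of_nonneg_right ?_ (by positivity)
              exact mul_le_mul_of_nonneg_right
                (mul_le_mul h3 hum (hpos x) (pow_nonneg (le_of_lt (hr0 _)) 3))
                (le_of_lt hZ0)
          _ = ((r (k+1))^3 * Real.exp (-(3/8)*(r k)^2)) *
              (u (c k • x) * (Z * Real.exp (-(c k * ‖x‖)^2/2))) := by ring
      have hGc : AEMeasurable (fun x => G (c k • x)) volume :=
        hG.comp_quasiMeasurePreserving (Measure.quasiMeasurePreserving_smul volume hckne)
      have hH : AEMeasurable (Ball.indicator G) volume := hG.indicator hBall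
      have hmap : Measure.map (fun x => c k • x)
            (volume : Measure (EuclideanSpace ℝ (Fin n)))
          = ENNReal.ofReal |((c k)^n)⁻¹| • volume := by
        have hm := Measure.map_addHaar_smul (volume : Measure (EuclideanSpace ℝ (Fin n))) hckne
        rwa [finrank_euclideanSpace_fin] at hm
      have hbk : |((c k)^n)⁻¹| = ((20/9)*(9/8:ℝ)^(k+1))^n := by
        rw [abs_of_pos (by positivity)]
        rw [← inv_pow]
        congr 1
        show ((9/20:ℝ)*(8/9)^(k+1))⁻¹ = (20/9)*(9/8:ℝ)^(k+1)
        rw [mul_inv, ← inv_pow]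
        norm_num
      have hsub : ∀ x ∈ A k, c k • x ∈ Ball := by
        intro x hx
        obtain ⟨-, hxb⟩ := hx
        have hnrm : ‖c k • x‖ = c k * ‖x‖ := by
          rw [norm_smul, Real.norm_eq_abs, abs_of_pos hck0]
        show ‖c k • x‖ < s
        rw [hnrm]
        calc c k * ‖x‖ ≤ c k * r (k+1) :=
              mul_le_mul_of_nonneg_left hxb (le_of_lt hck0)
          _ = (9/10)*s := hcr k
          _ < s := by linarith
      calc ∫⁻ x in A k, F x ∂volume
          ≤ ∫⁻ x in A k, ENNReal.ofReal Kk * G (c k • x) ∂volume :=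
            setLIntegral_mono_ae' (hAmeas k) (ae_of_all _ hpt)
        _ = ENNReal.ofReal Kk * ∫⁻ x in A k, G (c k • x) ∂volume :=
            lintegral_const_mul'' _ hGc.restrict
        _ = ENNReal.ofReal Kk * ∫⁻ x in A k, (Ball.indicator G) (c k • x) ∂volume := by
            congr 1
            refine setLIntegral_congr_fun (hAmeas k) (fun x hx => ?_)
            rw [Set.indicator_of_mem (hsub x hx)]
        _ ≤ ENNReal.ofReal Kk * ∫⁻ x, (Ball.indicator G) (c k • x) ∂volume :=
            mul_le_mul_right (setLIntegral_le_lintegral _ _) _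
        _ = ENNReal.ofReal Kk * (ENNReal.ofReal (((20/9)*(9/8:ℝ)^(k+1))^n) * IR) := by
            congr 1
            rw [← lintegral_map' (by rw [hmap]; exact hH.smul_measure _)
              (continuous_const_smul (c k)).measurable.aemeasurable]
            rw [hmap, lintegral_smul_measure, hbk, lintegral_indicator hBall]
            rfl
        _ = ENNReal.ofReal (Kk * ((20/9)*(9/8:ℝ)^(k+1))^n) * IR := by
            rw [ENNReal.ofReal_mul hKk0, mul_assoc]
        _ ≤ ENNReal.ofReal (Real.exp (-(n:ℝ)/2) * (1/2)^(k+1)) * IR := by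
            apply mul_le_mul_left
            apply ENNReal.ofReal_le_ofReal
            rw [hKkdef]
            rw [mul_assoc]
            rw [← mul_assoc]
            exact aux_coef n hn k
    calc ∑' k, ∫⁻ x in A k, F x ∂volume
        ≤ ∑' k, ENNReal.ofReal (Real.exp (-(n:ℝ)/2) * (1/2)^(k+1)) * IR :=
          ENNReal.tsum_le_tsum hshell
      _ = (∑' k, ENNReal.ofReal (Real.exp (-(n:ℝ)/2) * (1/2)^(k+1))) * IR :=
          ENNReal.tsum_mul_right
      _ ≤ ENNReal.ofReal (Real.exp (-(n:ℝ)/2)) * IR := by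
          apply mul_le_mul_left
          have hsplit : ∀ k : ℕ, ENNReal.ofReal (Real.exp (-(n:ℝ)/2) * (1/2)^(k+1))
              = ENNReal.ofReal (Real.exp (-(n:ℝ)/2)) * ENNReal.ofReal ((1/2:ℝ)^(k+1)) :=
            fun k => ENNReal.ofReal_mul (Real.exp_nonneg _)
          calc ∑' k : ℕ, ENNReal.ofReal (Real.exp (-(n:ℝ)/2) * (1/2)^(k+1))
              = ENNReal.ofReal (Real.exp (-(n:ℝ)/2)) *
                ∑' k : ℕ, ENNReal.ofReal ((1/2:ℝ)^(k+1)) := by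
                rw [← ENNReal.tsum_mul_left]
                exact tsum_congr hsplit
            _ ≤ ENNReal.ofReal (Real.exp (-(n:ℝ)/2)) * 1 := by
                apply mul_le_mul_right
                apply le_of_eq
                have h12 : ENNReal.ofReal ((1/2:ℝ)) = 2⁻¹ := by
                  rw [show (1/2:ℝ) = 2⁻¹ by norm_num,
                    ENNReal.ofReal_inv_of_pos (by norm_num), ENNReal.ofReal_ofNat]
                have hpow : ∀ k : ℕ, ENNReal.ofReal ((1/2:ℝ)^(k+1)) = (2⁻¹:ℝ≥0∞)^(k+1) := by
                  intro k
                  rw [← h12, ← ENNReal.ofReal_pow (by norm_num)]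
                calc ∑' k : ℕ, ENNReal.ofReal ((1/2:ℝ)^(k+1))
                    = ∑' k : ℕ, (2⁻¹:ℝ≥0∞)^(k+1) := tsum_congr hpow
                  _ = 2⁻¹ * ∑' k : ℕ, (2⁻¹:ℝ≥0∞)^k := by
                      rw [← ENNReal.tsum_mul_left]
                      exact tsum_congr fun k => pow_succ' _ _
                  _ = 2⁻¹ * (1 - 2⁻¹)⁻¹ := by rw [ENNReal.tsum_geometric]
                  _ = 1 := by
                      rw [ENNReal.one_sub_inv_two, inv_inv]
                      exact ENNReal.inv_mul_cancel (by norm_num) (by norm_num)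
            _ = ENNReal.ofReal (Real.exp (-(n:ℝ)/2)) := mul_one _
  rw [hLrep, hRrep]
  have hfin2 : ENNReal.ofReal (Real.exp (-(n:ℝ)/2)) * IR ≠ ⊤ :=
    ENNReal.mul_ne_top ENNReal.ofReal_ne_top hIRfin
  calc (∫⁻ x in Tail, F x ∂volume).toReal
      ≤ (ENNReal.ofReal (Real.exp (-(n:ℝ)/2)) * IR).toReal := ENNReal.toReal_mono hfin2 hmain
    _ = Real.exp (-(n:ℝ)/2) * IR.toReal := by
        rw [ENNReal.toReal_mul, ENNReal.toReal_ofReal (Real.exp_nonneg _)]
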